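/- For all natural numbers d and all j with 0 ≤ j ≤ d, the sum ∑_{k=0}^{d} (-1)^k · C(2k, j) · C(2d-2k, d-j) · C(d, k) equals (-1)^j · 2^d · C(d, j), where C(n,m) denotes the binomial coefficient. -/

import Mathlib

open Polynomial Finset

theorem step1 (d : ℕ) :
    ∑ k ∈ range (d + 1),
      (Polynomial.C (Polynomial.C ((-1:ℤ)^k * (d.choose k))) *
        Polynomial.C ((Polynomial.X + 1)^(2*k)) * (Polynomial.X + 1)^(2*(d-k)) :
        Polynomial (Polynomial ℤ))
      = (Polynomial.X + Polynomial.C (-Polynomial.X))^d *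
        (Polynomial.X + Polynomial.C (Polynomial.X + 2))^d := by
  have h : ((Polynomial.X + Polynomial.C (-Polynomial.X))^d *
      (Polynomial.X + Polynomial.C (Polynomial.X + 2))^d : Polynomial (Polynomial ℤ))
      = ((Polynomial.X + 1)^2 - (Polynomial.C Polynomial.X + 1)^2)^d := by
    rw [← mul_pow]; congr 1
    push_cast [map_add, map_neg]
    simp only [map_ofNat]
    ring
  rw [h, sub_pow]
  conv_rhs => rw [← Finset.sum_range_reflect]
  simp only [Nat.add_sub_cancel]
  apply Finset.sum_congr rfl
  intro k hk
  rw [Finset.mem_range, Nat.lt_succ_iff] at hk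
  rw [Nat.choose_symm hk, show d - (d - k) = k by omega]
  have hsign : ((-1:Polynomial (Polynomial ℤ))) ^ (d - k + d) = (-1)^k := by
    have h2 : ((-1:Polynomial (Polynomial ℤ)))^(d-k+d) * (-1)^k = 1 := by
      rw [← pow_add, show d - k + d + k = 2 * d by omega, pow_mul]; norm_num
    have h3 : ((-1:Polynomial (Polynomial ℤ)))^k * (-1)^k = 1 := by
      rw [← pow_add, ← two_mul, pow_mul]; norm_num
    calc ((-1:Polynomial (Polynomial ℤ)))^(d-k+d)
        = (-1)^(d-k+d) * ((-1)^k * (-1)^k) := by rw [h3, mul_one]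
      _ = ((-1)^(d-k+d) * (-1)^k) * (-1)^k := by ring
      _ = (-1)^k := by rw [h2, one_mul]
  rw [hsign]
  push_cast [map_pow, map_add, map_one, map_mul, map_neg, map_natCast]
  rw [← pow_mul, ← pow_mul]
  ring

theorem step2 (d j : ℕ) (hj : j ≤ d) :
    ((((Polynomial.X + Polynomial.C (-Polynomial.X))^d *
        (Polynomial.X + Polynomial.C (Polynomial.X + 2))^d :
        Polynomial (Polynomial ℤ))).coeff (d-j)).coeff j
      = (-1:ℤ)^j * 2^d * (d.choose j) := by
  have helper : ∀ (a b : ℕ) (c1 c2 : Polynomial ℤ),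
      ((-Polynomial.X)^a * c1) * ((Polynomial.X + 2)^b * c2)
      = (((-1:Polynomial ℤ))^a * c1 * c2 * (Polynomial.X + 2)^b) * Polynomial.X ^ a := by
    intro a b c1 c2; rw [neg_pow]; ring
  rw [Polynomial.coeff_mul]
  simp only [coeff_X_add_C_pow]
  rw [Polynomial.finset_sum_coeff]
  rw [Finset.sum_eq_single ((d-j, 0) : ℕ × ℕ)]
  · rw [helper, show d - (d - j) = j by omega, Polynomial.coeff_mul_X_pow', if_pos le_rfl,
      Nat.sub_self, Polynomial.coeff_zero_eq_eval_zero]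
    simp [Nat.choose_symm hj]
    ring
  · intro p hp hne
    rw [Finset.HasAntidiagonal.mem_antidiagonal] at hp
    have hlt : p.1 < d - j := by
      rcases Nat.lt_or_ge p.1 (d - j) with h | h
      · exact h
      · exfalso; exact hne (Prod.ext (by omega) (by omega))
    rw [helper, Polynomial.coeff_mul_X_pow', if_neg (by omega)]
  · intro h
    exact absurd (Finset.HasAntidiagonal.mem_antidiagonal.mpr (by simp)) h

theorem stmt0 (d j : ℕ) (hj : j ≤ d) :
    ∑ k ∈ Finset.range (d + 1),
      ((-1 : ℤ) ^ k * (Nat.choose (2 * k) j) * (Nat.choose (2 * d - 2 * k) (d - j)) *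
        (Nat.choose d k))
      = (-1 : ℤ) ^ j * 2 ^ d * (Nat.choose d j) := by
  have key := congrArg
    (fun p : Polynomial (Polynomial ℤ) => (p.coeff (d - j)).coeff j) (step1 d)
  rw [step2 d j hj] at key
  rw [← key, Polynomial.finset_sum_coeff, Polynomial.finset_sum_coeff]
  apply Finset.sum_congr rfl
  intro k hk
  rw [Finset.mem_range, Nat.lt_succ_iff] at hk
  rw [← map_mul, Polynomial.coeff_C_mul, Polynomial.coeff_X_add_one_pow,
    ← Polynomial.C_eq_natCast, Polynomial.coeff_mul_C, Polynomial.coeff_C_mul,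
    Polynomial.coeff_X_add_one_pow]
  rw [show 2 * (d - k) = 2 * d - 2 * k by omega]
  ring
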